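/- Let (ε_k, σ_k)_{k∈I} be a countable family with ε_k ∈ ℂ∖{0}, σ_k ∈ ℂ, such that for all a > 0: sup_{k∈I} |ε_k e^{−aσ_k}| < ∞ and ∑_{k∈I} |e^{−aσ_k}/ε_k|² < ∞. Then the structure maps μ_a(f_k ⊗ f_j) := δ_{kj} ε_k e^{−aσ_k} f_k, η_a(1) := ∑_k (e^{−aσ_k}/ε_k) f_k, Δ_a(f_k) := (e^{−aσ_k}/ε_k) f_k ⊗ f_k, ε_a(f_k) := ε_k e^{−aσ_k} are all bounded operators on the Hilbert space A = ⊕_{k∈I} ℂf_k (orthonormal f_k), defining a commutative regularised Frobenius algebra with P_a(f_k) = e^{−aσ_k} f_k strongly continuous in a and lim_{a→0} P_a = id, which is moreover strongly separable with window element equal to η_a. -/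

import Mathlib

open scoped ComplexConjugate

namespace Stmt18Aux

open Filter Function

lemma rp2 (x : ℝ) : x ^ (2 : ENNReal).toReal = x ^ 2 := by
  rw [show ((2 : ENNReal).toReal) = ((2 : ℕ) : ℝ) by norm_num, Real.rpow_natCast]

lemma two_pos' : 0 < (2 : ENNReal).toReal := by norm_num

lemma summable_sq {α : Type*} (f : lp (fun _ : α => ℂ) 2) :
    Summable fun k => ‖f k‖ ^ 2 := by
  have := (lp.memℓp f).summable two_pos'
  simpa [rp2] using this

lemma norm_sq_eq {α : Type*} (f : lp (fun _ : α => ℂ) 2) :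
    ‖f‖ ^ 2 = ∑' k, ‖f k‖ ^ 2 := by
  have := lp.norm_rpow_eq_tsum two_pos' f
  simpa [rp2] using this

lemma memH {α : Type*} {f : α → ℂ} (h : Summable fun k => ‖f k‖ ^ 2) :
    f ∈ lp (fun _ : α => ℂ) 2 :=
  memℓp_gen (by simpa [rp2] using h)

lemma norm_le_of_sq {α : Type*} (f : lp (fun _ : α => ℂ) 2) {C : ℝ} (hC : 0 ≤ C)
    (h : ∑' k, ‖f k‖ ^ 2 ≤ C ^ 2) : ‖f‖ ≤ C := by
  apply lp.norm_le_of_tsum_le two_pos' hC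
  simpa [rp2] using h

lemma sq_mul_bound {z w : ℂ} {M : ℝ} (h : ‖z‖ ≤ M) : ‖z * w‖ ^ 2 ≤ M ^ 2 * ‖w‖ ^ 2 := by
  rw [norm_mul, mul_pow]
  exact mul_le_mul_of_nonneg_right (pow_le_pow_left₀ (norm_nonneg z) h 2) (sq_nonneg _)

/-- The key boundedness property for a "pullback multiplier" operator. -/
def Key {α β : Type*} (g : β → α) (c : β → ℂ) : Prop :=
  ∃ M : ℝ, 0 ≤ M ∧ ∀ x : α → ℂ, Summable (fun k => ‖x k‖ ^ 2) →
    Summable (fun j => ‖c j * x (g j)‖ ^ 2) ∧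
      ∑' j, ‖c j * x (g j)‖ ^ 2 ≤ M ^ 2 * ∑' k, ‖x k‖ ^ 2

lemma keyInj {α β : Type*} {g : β → α} (hg : Function.Injective g) {c : β → ℂ} {M : ℝ}
    (hM0 : 0 ≤ M) (hM : ∀ j, ‖c j‖ ≤ M) : Key g c := by
  refine ⟨M, hM0, fun x hx => ?_⟩
  have hxg : Summable fun j => ‖x (g j)‖ ^ 2 := hx.comp_injective hg
  have hle : ∀ j, ‖c j * x (g j)‖ ^ 2 ≤ M ^ 2 * ‖x (g j)‖ ^ 2 := fun j => sq_mul_bound (hM j)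
  have hs : Summable fun j => ‖c j * x (g j)‖ ^ 2 :=
    Summable.of_nonneg_of_le (fun j => by positivity) hle (hxg.mul_left _)
  refine ⟨hs, ?_⟩
  calc ∑' j, ‖c j * x (g j)‖ ^ 2 ≤ ∑' j, M ^ 2 * ‖x (g j)‖ ^ 2 :=
        Summable.tsum_le_tsum hle hs (hxg.mul_left _)
    _ = M ^ 2 * ∑' j, ‖x (g j)‖ ^ 2 := tsum_mul_left
    _ ≤ M ^ 2 * ∑' k, ‖x k‖ ^ 2 := by
        refine mul_le_mul_of_nonneg_left ?_ (sq_nonneg M)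
        exact Summable.tsum_le_tsum_of_inj g hg (fun c _ => by positivity) (fun j => le_rfl) hxg hx

lemma keyDiag {I : Type*} [DecidableEq I] {d : I → ℂ} {M : ℝ}
    (hM0 : 0 ≤ M) (hM : ∀ k, ‖d k‖ ≤ M) :
    Key (Prod.fst : I × I → I) (fun p => if p.1 = p.2 then d p.1 else 0) := by
  refine ⟨M, hM0, fun x hx => ?_⟩
  set F : I × I → ℝ := fun p => ‖(if p.1 = p.2 then d p.1 else 0) * x p.1‖ ^ 2 with hF
  have hdiag : Function.Injective (fun k : I => (k, k)) := fun a b h => congrArg Prod.fst h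
  have hF0 : ∀ p : I × I, p ∉ Set.range (fun k : I => (k, k)) → F p = 0 := by
    intro p hp
    have hne : p.1 ≠ p.2 := by
      intro h
      exact hp ⟨p.1, by rw [Prod.ext_iff]; exact ⟨rfl, h⟩⟩
    simp [hF, if_neg hne]
  have hcomp : (F ∘ fun k : I => (k, k)) = fun k => ‖d k * x k‖ ^ 2 := by
    funext k; simp [hF]
  have hle : ∀ k, ‖d k * x k‖ ^ 2 ≤ M ^ 2 * ‖x k‖ ^ 2 := fun k => sq_mul_bound (hM k)
  have hsd : Summable fun k => ‖d k * x k‖ ^ 2 :=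
    Summable.of_nonneg_of_le (fun k => by positivity) hle (hx.mul_left _)
  have hsF : Summable F := by
    refine (hdiag.summable_iff hF0).1 ?_
    rw [hcomp]; exact hsd
  have htsum : ∑' p, F p = ∑' k, ‖d k * x k‖ ^ 2 := by
    rw [← hdiag.tsum_eq]
    · exact tsum_congr fun k => congrFun hcomp k
    · intro p hp
      by_contra hr
      exact hp (hF0 p hr)
  refine ⟨hsF, ?_⟩
  calc ∑' p, F p = ∑' k, ‖d k * x k‖ ^ 2 := htsum
    _ ≤ ∑' k, M ^ 2 * ‖x k‖ ^ 2 := Summable.tsum_le_tsum hle hsd (hx.mul_left _)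
    _ = M ^ 2 * ∑' k, ‖x k‖ ^ 2 := tsum_mul_left

/-- Bounded "pullback multiplier" operator between `ℓ²` spaces. -/
noncomputable def mkOp' {α β : Type*} (g : β → α) (c : β → ℂ) (h : Key g c) :
    lp (fun _ : α => ℂ) 2 →L[ℂ] lp (fun _ : β => ℂ) 2 :=
  LinearMap.mkContinuous
    { toFun := fun x => ⟨fun j => c j * x (g j),
        memH ((h.choose_spec.2 x (summable_sq x)).1)⟩
      map_add' := fun x y => by
        apply lp.ext
        funext j
        show c j * (x + y) (g j) = c j * x (g j) + c j * y (g j)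
        rw [lp.coeFn_add, Pi.add_apply, mul_add]
      map_smul' := fun r x => by
        apply lp.ext
        funext j
        show c j * (r • x) (g j) = r • (c j * x (g j))
        rw [lp.coeFn_smul, Pi.smul_apply, smul_eq_mul, smul_eq_mul]
        ring }
    h.choose
    (fun x => by
      apply norm_le_of_sq _ (mul_nonneg h.choose_spec.1 (norm_nonneg x))
      have h2 := (h.choose_spec.2 x (summable_sq x)).2
      calc (∑' j, ‖c j * x (g j)‖ ^ 2) ≤ h.choose ^ 2 * ∑' k, ‖x k‖ ^ 2 := h2
        _ = (h.choose * ‖x‖) ^ 2 := by rw [mul_pow, norm_sq_eq])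

@[simp] lemma mkOp'_apply {α β : Type*} (g : β → α) (c : β → ℂ) (h : Key g c)
    (x : lp (fun _ : α => ℂ) 2) (j : β) : mkOp' g c h x j = c j * x (g j) := rfl

lemma eIcc {s t a : ℝ} (hs : s ≤ a) (ht : a ≤ t) (z : ℂ) :
    ‖Complex.exp (-(a : ℂ) * z)‖ ≤
      max ‖Complex.exp (-(s : ℂ) * z)‖ ‖Complex.exp (-(t : ℂ) * z)‖ := by
  have hn : ∀ b : ℝ, ‖Complex.exp (-(b : ℂ) * z)‖ = Real.exp (-b * z.re) := by
    intro b
    rw [Complex.norm_exp]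
    congr 1
    simp [Complex.mul_re]
  rw [hn, hn, hn]
  rcases le_or_gt 0 z.re with h | h
  · exact le_trans (Real.exp_le_exp.2 (by nlinarith)) (le_max_left _ _)
  · exact le_trans (Real.exp_le_exp.2 (by nlinarith)) (le_max_right _ _)

lemma tendsto_mult {I : Type*} (x : lp (fun _ : I => ℂ) 2) (l : Filter ℝ)
    (c : ℝ → I → ℂ) (c₀ : I → ℂ) (B : ℝ)
    (hbd : ∀ᶠ a in l, ∀ k, ‖c a k - c₀ k‖ ≤ B)
    (hpt : ∀ k, Filter.Tendsto (fun a => c a k) l (nhds (c₀ k)))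
    (F : ℝ → lp (fun _ : I => ℂ) 2) (y : lp (fun _ : I => ℂ) 2)
    (hF : ∀ᶠ a in l, ∀ k, F a k = c a k * x k) (hy : ∀ k, y k = c₀ k * x k) :
    Filter.Tendsto F l (nhds y) := by
  rw [tendsto_iff_norm_sub_tendsto_zero]
  have hS : Tendsto (fun a => ∑' k, ‖(c a k - c₀ k) * x k‖ ^ 2) l (nhds 0) := by
    have h0 : Tendsto (fun a => ∑' k, ‖(c a k - c₀ k) * x k‖ ^ 2) l
        (nhds (∑' _ : I, (0 : ℝ))) := by
      apply tendsto_tsum_of_dominated_convergence (bound := fun k => B ^ 2 * ‖x k‖ ^ 2)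
      · exact (summable_sq x).mul_left _
      · intro k
        have h1 : Tendsto (fun a => (c a k - c₀ k) * x k) l (nhds ((c₀ k - c₀ k) * x k)) :=
          ((hpt k).sub tendsto_const_nhds).mul tendsto_const_nhds
        simpa using h1.norm.pow 2
      · filter_upwards [hbd] with a ha k
        calc ‖‖(c a k - c₀ k) * x k‖ ^ 2‖ = ‖(c a k - c₀ k) * x k‖ ^ 2 :=
              Real.norm_of_nonneg (by positivity)
          _ ≤ B ^ 2 * ‖x k‖ ^ 2 := sq_mul_bound (ha k)
    simpa using h0
  have heq : (fun a => Real.sqrt (∑' k, ‖(c a k - c₀ k) * x k‖ ^ 2)) =ᶠ[l]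
      fun a => ‖F a - y‖ := by
    filter_upwards [hF] with a ha
    have hc : ∀ k, (F a - y) k = (c a k - c₀ k) * x k := by
      intro k
      rw [lp.coeFn_sub, Pi.sub_apply, ha k, hy k, sub_mul]
    rw [show (∑' k, ‖(c a k - c₀ k) * x k‖ ^ 2) = ∑' k, ‖(F a - y) k‖ ^ 2 from
      tsum_congr fun k => by rw [hc k], ← norm_sq_eq, Real.sqrt_sq (norm_nonneg _)]
  exact Tendsto.congr' heq ((Real.continuous_sqrt.tendsto' 0 0 Real.sqrt_zero).comp hS)

end Stmt18Aux

open Stmt18Aux Filter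

/-- The direct-sum RFA `A_{ε,σ} = ⊕_{k∈I} ℂ f_k` in `Hilb`.  Given a countable family
`(ε_k, σ_k)` with `sup_k |ε_k e^{-aσ_k}| < ∞` and `∑_k |e^{-aσ_k}/ε_k|² < ∞` for all
`a > 0`, the structure maps
`μ_a(f_k ⊗ f_j) = δ_{kj} ε_k e^{-aσ_k} f_k`, `η_a = ∑ (e^{-aσ_k}/ε_k) f_k`,
`Δ_a(f_k) = (e^{-aσ_k}/ε_k) f_k ⊗ f_k`, `ε_a(f_k) = ε_k e^{-aσ_k}`
are bounded operators (with `A ⊗ A` realised as `ℓ²(I × I)`) and define a commutative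
regularised Frobenius algebra with `P_a f_k = e^{-aσ_k} f_k` strongly continuous,
`lim_{a→0} P_a = id`, which is strongly separable with window element `η_a`
(its own inverse). -/
theorem stmt18 {I : Type*} [Countable I] [DecidableEq I] (ε σ : I → ℂ) (hε : ∀ k, ε k ≠ 0)
    (hsup : ∀ a : ℝ, 0 < a →
      BddAbove (Set.range fun k : I => ‖ε k * Complex.exp (-(a : ℂ) * σ k)‖))
    (hsum : ∀ a : ℝ, 0 < a →
      Summable fun k : I => ‖Complex.exp (-(a : ℂ) * σ k) / ε k‖ ^ 2) :
    ∃ (μop : ℝ → (lp (fun _ : I × I => ℂ) 2 →L[ℂ] lp (fun _ : I => ℂ) 2))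
      (Δop : ℝ → (lp (fun _ : I => ℂ) 2 →L[ℂ] lp (fun _ : I × I => ℂ) 2))
      (ηv : ℝ → lp (fun _ : I => ℂ) 2)
      (εop : ℝ → (lp (fun _ : I => ℂ) 2 →L[ℂ] ℂ))
      (Pop : ℝ → (lp (fun _ : I => ℂ) 2 →L[ℂ] lp (fun _ : I => ℂ) 2)),
      -- component formulas of the structure maps
      (∀ a : ℝ, 0 < a → ∀ (u : lp (fun _ : I × I => ℂ) 2) (k : I),
        μop a u k = ε k * Complex.exp (-(a : ℂ) * σ k) * u (k, k)) ∧
      (∀ a : ℝ, 0 < a → ∀ k : I, ηv a k = Complex.exp (-(a : ℂ) * σ k) / ε k) ∧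
      (∀ a : ℝ, 0 < a → ∀ (x : lp (fun _ : I => ℂ) 2) (p : I × I),
        Δop a x p = if p.1 = p.2
          then Complex.exp (-(a : ℂ) * σ p.1) / ε p.1 * x p.1 else 0) ∧
      (∀ a : ℝ, 0 < a → ∀ x : lp (fun _ : I => ℂ) 2,
        εop a x = ∑' k : I, ε k * Complex.exp (-(a : ℂ) * σ k) * x k) ∧
      (∀ a : ℝ, 0 < a → ∀ (x : lp (fun _ : I => ℂ) 2) (k : I),
        Pop a x k = Complex.exp (-(a : ℂ) * σ k) * x k) ∧
      -- commutativity of the product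
      (∀ a : ℝ, 0 < a → ∀ u v : lp (fun _ : I × I => ℂ) 2,
        (∀ p : I × I, v p = u (p.2, p.1)) → μop a v = μop a u) ∧
      -- area-additive unit law: μ_{a₁} ∘ (id ⊗ η_{a₂}) = P_{a₁+a₂}
      (∀ a₁ a₂ : ℝ, 0 < a₁ → 0 < a₂ →
        ∀ (x : lp (fun _ : I => ℂ) 2) (u : lp (fun _ : I × I => ℂ) 2),
        (∀ p : I × I, u p = x p.1 * ηv a₂ p.2) → μop a₁ u = Pop (a₁ + a₂) x) ∧
      -- area-additive counit law: (id ⊗ ε_{a₂}) ∘ Δ_{a₁} = P_{a₁+a₂}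
      (∀ a₁ a₂ : ℝ, 0 < a₁ → 0 < a₂ → ∀ (x : lp (fun _ : I => ℂ) 2) (k : I),
        (∑' j : I, Δop a₁ x (k, j) * (ε j * Complex.exp (-(a₂ : ℂ) * σ j)))
          = Pop (a₁ + a₂) x k) ∧
      -- Frobenius relation: (id ⊗ μ_{a₁}) ∘ (Δ_{a₂} ⊗ id) = Δ_{b₁} ∘ μ_{b₂}
      (∀ a₁ a₂ b₁ b₂ : ℝ, 0 < a₁ → 0 < a₂ → 0 < b₁ → 0 < b₂ → a₁ + a₂ = b₁ + b₂ →
        ∀ u w : lp (fun _ : I × I => ℂ) 2,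
        (∀ q : I × I, w q = if q.1 = q.2
            then Complex.exp (-((a₁ + a₂ : ℝ) : ℂ) * σ q.1) * u (q.1, q.1) else 0) →
        Δop b₁ (μop b₂ u) = w) ∧
      -- strong continuity of P and convergence to the identity
      (∀ x : lp (fun _ : I => ℂ) 2, ContinuousOn (fun a : ℝ => Pop a x) (Set.Ioi 0)) ∧
      (∀ x : lp (fun _ : I => ℂ) 2,
        Filter.Tendsto (fun a : ℝ => Pop a x) (nhdsWithin 0 (Set.Ioi 0)) (nhds x)) ∧
      -- window element τ_a = μ_{a₁}(Δ_{a₂}(η_{a₃})) equals η_a ...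
      (∀ a₁ a₂ a₃ : ℝ, 0 < a₁ → 0 < a₂ → 0 < a₃ →
        μop a₁ (Δop a₂ (ηv a₃)) = ηv (a₁ + a₂ + a₃)) ∧
      -- ... and is invertible with inverse η (strong separability)
      (∀ a₁ a₂ a₃ : ℝ, 0 < a₁ → 0 < a₂ → 0 < a₃ →
        ∀ u : lp (fun _ : I × I => ℂ) 2,
        (∀ p : I × I, u p = ηv a₂ p.1 * ηv a₃ p.2) →
        μop a₁ u = ηv (a₁ + a₂ + a₃)) := by
  classical
  -- coefficient families
  set cc : ℝ → I → ℂ := fun a k => ε k * Complex.exp (-(a : ℂ) * σ k) with hccdef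
  set dd : ℝ → I → ℂ := fun a k => Complex.exp (-(a : ℂ) * σ k) / ε k with hdddef
  set ee : ℝ → I → ℂ := fun a k => Complex.exp (-(a : ℂ) * σ k) with heedef
  -- basic exponential identities
  have hexp : ∀ a b : ℝ, ∀ z : ℂ, Complex.exp (-((a + b : ℝ) : ℂ) * z)
      = Complex.exp (-(a : ℂ) * z) * Complex.exp (-(b : ℂ) * z) := by
    intro a b z
    rw [← Complex.exp_add]
    congr 1
    push_cast
    ring
  have hcd : ∀ a b : ℝ, ∀ k, cc a k * dd b k = ee (a + b) k := by
    intro a b k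
    simp only [hccdef, hdddef, heedef, hexp a b]
    field_simp [hε k]
  have hdc : ∀ a b : ℝ, ∀ k, dd a k * cc b k = ee (a + b) k := by
    intro a b k
    rw [mul_comm, hcd b a k]
    congr 1
    ring
  have hce : ∀ a b : ℝ, ∀ k, cc a k * ee b k = cc (a + b) k := by
    intro a b k
    simp only [hccdef, heedef, hexp a b]
    ring
  have hed : ∀ a b : ℝ, ∀ k, ee a k * dd b k = dd (a + b) k := by
    intro a b k
    simp only [hdddef, heedef, hexp a b]
    ring
  -- bounds
  have hccb : ∀ a : ℝ, 0 < a → ∃ M : ℝ, 0 ≤ M ∧ ∀ k, ‖cc a k‖ ≤ M := by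
    intro a ha
    obtain ⟨M, hM⟩ := hsup a ha
    exact ⟨max M 0, le_max_right _ _,
      fun k => le_trans (hM ⟨k, rfl⟩) (le_max_left _ _)⟩
  have hdsum : ∀ a : ℝ, 0 < a → Summable fun k => ‖dd a k‖ ^ 2 := fun a ha => hsum a ha
  have hddb : ∀ a : ℝ, 0 < a → ∃ M : ℝ, 0 ≤ M ∧ ∀ k, ‖dd a k‖ ≤ M := by
    intro a ha
    refine ⟨Real.sqrt (∑' k, ‖dd a k‖ ^ 2), Real.sqrt_nonneg _, fun k => ?_⟩
    have h1 : ‖dd a k‖ ^ 2 ≤ ∑' k, ‖dd a k‖ ^ 2 :=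
      Summable.le_tsum (hdsum a ha) k (fun j _ => by positivity)
    calc ‖dd a k‖ = Real.sqrt (‖dd a k‖ ^ 2) := (Real.sqrt_sq (norm_nonneg _)).symm
      _ ≤ _ := Real.sqrt_le_sqrt h1
  have heeb : ∀ a : ℝ, 0 < a → ∃ M : ℝ, 0 ≤ M ∧ ∀ k, ‖ee a k‖ ≤ M := by
    intro a ha
    obtain ⟨M₁, h10, h1⟩ := hccb (a / 2) (by linarith)
    obtain ⟨M₂, h20, h2⟩ := hddb (a / 2) (by linarith)
    refine ⟨M₁ * M₂, mul_nonneg h10 h20, fun k => ?_⟩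
    have : ee a k = cc (a / 2) k * dd (a / 2) k := by rw [hcd, add_halves]
    rw [this, norm_mul]
    exact mul_le_mul (h1 k) (h2 k) (norm_nonneg _) h10
  have hcsum : ∀ a : ℝ, 0 < a → Summable fun k => ‖cc a k‖ ^ 2 := by
    intro a ha
    obtain ⟨M₁, h10, h1⟩ := hccb (a / 2) (by linarith)
    obtain ⟨M₂, h20, h2⟩ := hccb (a / 4) (by linarith)
    have hid : ∀ k, cc a k = cc (a / 2) k * cc (a / 4) k * dd (a / 4) k := by
      intro k
      rw [mul_assoc, hcd (a / 4) (a / 4) k, show a / 4 + a / 4 = a / 2 by ring,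
        hce (a / 2) (a / 2) k, show a / 2 + a / 2 = a by ring]
    refine Summable.of_nonneg_of_le (fun k => by positivity) (fun k => ?_)
      ((hdsum (a / 4) (by linarith)).mul_left ((M₁ * M₂) ^ 2))
    have hb : ‖cc a k‖ ≤ M₁ * M₂ * ‖dd (a / 4) k‖ := by
      rw [hid k, norm_mul, norm_mul]
      exact mul_le_mul_of_nonneg_right
        (mul_le_mul (h1 k) (h2 k) (norm_nonneg _) h10) (norm_nonneg _)
    calc ‖cc a k‖ ^ 2 ≤ (M₁ * M₂ * ‖dd (a / 4) k‖) ^ 2 :=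
          pow_le_pow_left₀ (norm_nonneg _) hb 2
      _ = (M₁ * M₂) ^ 2 * ‖dd (a / 4) k‖ ^ 2 := by ring
  -- the five structure maps, with their coordinate formulas
  have hdiag : Function.Injective (fun k : I => (k, k)) := fun a b h => congrArg Prod.fst h
  have keyμ : ∀ a : ℝ, 0 < a → Key (fun k : I => (k, k)) (cc a) := by
    intro a ha
    obtain ⟨M, hM0, hM⟩ := hccb a ha
    exact keyInj hdiag hM0 hM
  obtain ⟨μop, hμ⟩ : ∃ μop : ℝ → (lp (fun _ : I × I => ℂ) 2 →L[ℂ] lp (fun _ : I => ℂ) 2),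
      ∀ a : ℝ, 0 < a → ∀ u k, μop a u k = cc a k * u (k, k) := by
    refine ⟨fun a => if ha : 0 < a then
      mkOp' (fun k : I => (k, k)) (cc a) (keyμ a ha) else 0, ?_⟩
    intro a ha u k
    simp only [dif_pos ha, mkOp'_apply]
  have keyΔ : ∀ a : ℝ, 0 < a →
      Key (Prod.fst : I × I → I) (fun p : I × I => if p.1 = p.2 then dd a p.1 else 0) := by
    intro a ha
    obtain ⟨M, hM0, hM⟩ := hddb a ha
    exact keyDiag hM0 hM
  obtain ⟨Δop, hΔ⟩ : ∃ Δop : ℝ → (lp (fun _ : I => ℂ) 2 →L[ℂ] lp (fun _ : I × I => ℂ) 2),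
      ∀ a : ℝ, 0 < a → ∀ x p, Δop a x p = if p.1 = p.2 then dd a p.1 * x p.1 else 0 := by
    refine ⟨fun a => if ha : 0 < a then
      mkOp' (Prod.fst : I × I → I) (fun p : I × I => if p.1 = p.2 then dd a p.1 else 0)
        (keyΔ a ha) else 0, ?_⟩
    intro a ha x p
    simp only [dif_pos ha, mkOp'_apply, ite_mul, zero_mul]
  obtain ⟨ηv, hη⟩ : ∃ ηv : ℝ → lp (fun _ : I => ℂ) 2,
      ∀ a : ℝ, 0 < a → ∀ k, ηv a k = dd a k := by
    refine ⟨fun a => if ha : 0 < a then ⟨dd a, memH (hdsum a ha)⟩ else 0, ?_⟩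
    intro a ha k
    simp only [dif_pos ha]
  obtain ⟨εop, hεop⟩ : ∃ εop : ℝ → (lp (fun _ : I => ℂ) 2 →L[ℂ] ℂ),
      ∀ a : ℝ, 0 < a → ∀ x, εop a x = ∑' k, cc a k * x k := by
    refine ⟨fun a => if ha : 0 < a then
      innerSL ℂ (⟨fun k => conj (cc a k), memH (by simpa using hcsum a ha)⟩ :
        lp (fun _ : I => ℂ) 2) else 0, ?_⟩
    intro a ha x
    simp only [dif_pos ha, innerSL_apply_apply]
    rw [lp.inner_eq_tsum]
    exact tsum_congr fun k => by simp [RCLike.inner_apply, mul_comm]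
  have keyP : ∀ a : ℝ, 0 < a → Key (id : I → I) (ee a) := by
    intro a ha
    obtain ⟨M, hM0, hM⟩ := heeb a ha
    exact keyInj (fun a b h => h) hM0 hM
  obtain ⟨Pop, hP⟩ : ∃ Pop : ℝ → (lp (fun _ : I => ℂ) 2 →L[ℂ] lp (fun _ : I => ℂ) 2),
      ∀ a : ℝ, 0 < a → ∀ x k, Pop a x k = ee a k * x k := by
    refine ⟨fun a => if ha : 0 < a then mkOp' (id : I → I) (ee a) (keyP a ha) else 0, ?_⟩
    intro a ha x k
    simp only [dif_pos ha, mkOp'_apply]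
    rfl
  refine ⟨μop, Δop, ηv, εop, Pop, ?_, ?_, ?_, ?_, ?_, ?_, ?_, ?_, ?_, ?_, ?_, ?_, ?_⟩
  · exact fun a ha u k => hμ a ha u k
  · exact fun a ha k => hη a ha k
  · exact fun a ha x p => hΔ a ha x p
  · exact fun a ha x => hεop a ha x
  · exact fun a ha x k => hP a ha x k
  · -- commutativity
    intro a ha u v hv
    apply lp.ext
    funext k
    rw [hμ a ha, hμ a ha, hv (k, k)]
  · -- unit law
    intro a₁ a₂ ha₁ ha₂ x u hu
    apply lp.ext
    funext k
    rw [hμ a₁ ha₁, hP (a₁ + a₂) (by linarith), hu (k, k)]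
    show cc a₁ k * (x k * ηv a₂ k) = ee (a₁ + a₂) k * x k
    rw [hη a₂ ha₂ k, mul_comm (x k) (dd a₂ k), ← mul_assoc, hcd a₁ a₂ k]
  · -- counit law
    intro a₁ a₂ ha₁ ha₂ x k
    rw [hP (a₁ + a₂) (by linarith)]
    have hz : ∀ j, j ≠ k →
        Δop a₁ x (k, j) * (ε j * Complex.exp (-(a₂ : ℂ) * σ j)) = 0 := by
      intro j hj
      rw [hΔ a₁ ha₁ x (k, j)]
      simp [if_neg (Ne.symm hj)]
    rw [tsum_eq_single k hz, hΔ a₁ ha₁ x (k, k)]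
    show (if k = k then dd a₁ k * x k else 0) * cc a₂ k = ee (a₁ + a₂) k * x k
    rw [if_pos rfl, mul_right_comm, hdc a₁ a₂ k]
  · -- Frobenius relation
    intro a₁ a₂ b₁ b₂ ha₁ ha₂ hb₁ hb₂ hab u w hw
    apply lp.ext
    funext p
    rw [hΔ b₁ hb₁ _ p, hμ b₂ hb₂ u p.1, hw p]
    by_cases h : p.1 = p.2
    · rw [if_pos h, if_pos h, ← mul_assoc, hdc b₁ b₂]
      show ee (b₁ + b₂) p.1 * u (p.1, p.1) = ee (a₁ + a₂) p.1 * u (p.1, p.1)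
      rw [hab]
    · rw [if_neg h, if_neg h]
  · -- strong continuity on (0,∞)
    intro x a₀ ha₀
    have ha₀' : (0 : ℝ) < a₀ := ha₀
    obtain ⟨B₁, hB₁0, hB₁⟩ := heeb (a₀ / 2) (by linarith)
    obtain ⟨B₂, hB₂0, hB₂⟩ := heeb (2 * a₀) (by linarith)
    set B := max B₁ B₂ with hB
    have hbd : ∀ a ∈ Set.Icc (a₀ / 2) (2 * a₀), ∀ k, ‖ee a k‖ ≤ B := by
      intro a ha k
      refine le_trans (eIcc ha.1 ha.2 (σ k)) ?_
      exact max_le_max (hB₁ k) (hB₂ k)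
    have hev : ∀ᶠ a in nhdsWithin a₀ (Set.Ioi 0), a ∈ Set.Icc (a₀ / 2) (2 * a₀) := by
      apply Filter.Eventually.filter_mono nhdsWithin_le_nhds
      filter_upwards [Ioo_mem_nhds (show a₀ / 2 < a₀ by linarith)
        (show a₀ < 2 * a₀ by linarith)] with a ha
      exact ⟨le_of_lt ha.1, le_of_lt ha.2⟩
    have hmem : a₀ ∈ Set.Icc (a₀ / 2) (2 * a₀) := ⟨by linarith, by linarith⟩
    apply tendsto_mult x (nhdsWithin a₀ (Set.Ioi 0)) ee (ee a₀) (2 * B)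
    · filter_upwards [hev] with a ha k
      calc ‖ee a k - ee a₀ k‖ ≤ ‖ee a k‖ + ‖ee a₀ k‖ := norm_sub_le _ _
        _ ≤ B + B := add_le_add (hbd a ha k) (hbd a₀ hmem k)
        _ = 2 * B := by ring
    · intro k
      apply Filter.Tendsto.mono_left ?_ nhdsWithin_le_nhds
      have hcont : Continuous fun a : ℝ => ee a k := by
        simp only [heedef]
        exact Complex.continuous_exp.comp
          (((Complex.continuous_ofReal.neg).mul continuous_const))
      exact hcont.tendsto a₀
    · filter_upwards [self_mem_nhdsWithin] with a (ha : a ∈ Set.Ioi 0) k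
      exact hP a ha x k
    · exact fun k => hP a₀ ha₀' x k
  · -- strong convergence to the identity as a → 0⁺
    intro x
    obtain ⟨B₁, hB₁0, hB₁⟩ := heeb 1 one_pos
    set B := max 1 B₁ with hB
    have hbd : ∀ a ∈ Set.Icc (0 : ℝ) 1, ∀ k, ‖ee a k‖ ≤ B := by
      intro a ha k
      refine le_trans (eIcc ha.1 ha.2 (σ k)) ?_
      refine max_le_max ?_ (hB₁ k)
      show ‖Complex.exp (-((0 : ℝ) : ℂ) * σ k)‖ ≤ 1
      simp
    have hone : ‖(1 : ℂ)‖ ≤ B := by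
      rw [norm_one]; exact le_max_left _ _
    have hev : ∀ᶠ a in nhdsWithin 0 (Set.Ioi 0), a ∈ Set.Icc (0 : ℝ) 1 := by
      have h1 : ∀ᶠ a in nhdsWithin 0 (Set.Ioi 0), a ∈ Set.Ioi (0 : ℝ) :=
        self_mem_nhdsWithin
      have h2 : ∀ᶠ a in nhdsWithin (0 : ℝ) (Set.Ioi 0), a ∈ Set.Iio (1 : ℝ) :=
        Filter.Eventually.filter_mono nhdsWithin_le_nhds
          (Iio_mem_nhds (show (0:ℝ) < 1 by norm_num))
      filter_upwards [h1, h2] with a ha1 ha2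
      exact ⟨le_of_lt ha1, le_of_lt ha2⟩
    apply tendsto_mult x (nhdsWithin 0 (Set.Ioi 0)) ee (fun _ => 1) (2 * B)
    · filter_upwards [hev] with a ha k
      calc ‖ee a k - 1‖ ≤ ‖ee a k‖ + ‖(1 : ℂ)‖ := norm_sub_le _ _
        _ ≤ B + B := add_le_add (hbd a ha k) hone
        _ = 2 * B := by ring
    · intro k
      apply Filter.Tendsto.mono_left ?_ nhdsWithin_le_nhds
      have hcont : Continuous fun a : ℝ => ee a k := by
        simp only [heedef]
        exact Complex.continuous_exp.comp
          (((Complex.continuous_ofReal.neg).mul continuous_const))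
      have := hcont.tendsto 0
      simpa [heedef] using this
    · filter_upwards [self_mem_nhdsWithin] with a (ha : a ∈ Set.Ioi 0) k
      exact hP a ha x k
    · intro k
      rw [one_mul]
  · -- window element formula
    intro a₁ a₂ a₃ ha₁ ha₂ ha₃
    apply lp.ext
    funext k
    rw [hμ a₁ ha₁, hΔ a₂ ha₂, hη (a₁ + a₂ + a₃) (by linarith) k]
    show cc a₁ k * (if k = k then dd a₂ k * ηv a₃ k else 0) = dd (a₁ + a₂ + a₃) k
    rw [if_pos rfl, hη a₃ ha₃ k, ← mul_assoc, hcd a₁ a₂ k, hed (a₁ + a₂) a₃ k]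
  · -- strong separability
    intro a₁ a₂ a₃ ha₁ ha₂ ha₃ u hu
    apply lp.ext
    funext k
    rw [hμ a₁ ha₁, hu (k, k), hη (a₁ + a₂ + a₃) (by linarith) k]
    show cc a₁ k * (ηv a₂ k * ηv a₃ k) = dd (a₁ + a₂ + a₃) k
    rw [hη a₂ ha₂ k, hη a₃ ha₃ k, ← mul_assoc, hcd a₁ a₂ k, hed (a₁ + a₂) a₃ k]
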